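/- For any finite sequence A = (a_1,…,a_n) of positive integers, in the algebra 𝓕₂* one has S_A · S_A = S_{(2a_1, 2a_2, …, 2a_n)}; equivalently, in the overlapping shuffle multiset A·A the sequence (2a_1,…,2a_n) occurs with odd multiplicity and every other sequence occurs with even multiplicity. -/

import Mathlib

/-- The overlapping shuffle product of two finite sequences, as a multiset
(counting multiplicities). -/
def osp : List ℕ → List ℕ → Multiset (List ℕ)
  | A, [] => {A}
  | [], B => {B}
  | a :: A, b :: B =>
      ((osp A (b :: B)).map (a :: ·)) +
      ((osp (a :: A) B).map (b :: ·)) +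
      ((osp A B).map ((a + b) :: ·))
termination_by A B => A.length + B.length
decreasing_by all_goals (simp only [List.length_cons]; omega)

/-- The underlying free module over `ZMod 2` on the set of finite sequences
(this carries the mod 2 dual Leibniz--Hopf algebra `𝓕₂*`). -/
abbrev F2D : Type := (List ℕ) →₀ ZMod 2

/-- The basis element `S_I`. -/
noncomputable def sElem (I : List ℕ) : F2D := Finsupp.single I 1

/-- The element of `𝓕₂*` associated to a multiset of sequences, keeping
multiplicities mod 2. -/
noncomputable def ofMS (m : Multiset (List ℕ)) : F2D := (m.map sElem).sum

/-- The bilinear product of `𝓕₂*`: on basis elements,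
`S_I · S_J = Σ_K (multiplicity of K in osp I J mod 2) • S_K`. -/
noncomputable def fmul (x y : F2D) : F2D :=
  x.sum fun I a => y.sum fun J b => (a * b) • ofMS (osp I J)

lemma osp_comm : ∀ A B : List ℕ, osp A B = osp B A := by
  have key : ∀ n A B, A.length + B.length = n → osp A B = osp B A := by
    intro n
    induction n using Nat.strong_induction_on with
    | _ n ih =>
      intro A B h
      match A, B with
      | [], [] => rfl
      | a :: A, [] => simp [osp]
      | [], b :: B => simp [osp]
      | a :: A, b :: B =>
        rw [osp, osp]
        rw [ih (A.length + (b :: B).length) (by simp at h ⊢; omega) A (b :: B) rfl,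
            ih ((a :: A).length + B.length) (by simp at h ⊢; omega) (a :: A) B rfl,
            ih (A.length + B.length) (by simp at h ⊢; omega) A B rfl,
            Nat.add_comm a b]
        exact congrArg (· + _) (add_comm _ _)
  intro A B; exact key _ A B rfl

lemma ofMS_add (m n : Multiset (List ℕ)) : ofMS (m + n) = ofMS m + ofMS n := by
  simp [ofMS]

lemma self_cancel (x : F2D) : x + x = 0 := by
  rw [← two_smul (ZMod 2) x]
  rw [show (2 : ZMod 2) = 0 from rfl, zero_smul]

lemma ofMS_map_cons (c : ℕ) (m : Multiset (List ℕ)) :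
    ofMS (m.map (c :: ·)) = Finsupp.mapDomain (c :: ·) (ofMS m) := by
  rw [ofMS, ofMS, ← Finsupp.mapDomain.addMonoidHom_apply,
    AddMonoidHom.map_multiset_sum, Multiset.map_map, Multiset.map_map]
  congr 1
  congr 1
  funext x
  simp [sElem, Finsupp.mapDomain.addMonoidHom_apply, Finsupp.mapDomain_single]

lemma ofMS_osp_self (A : List ℕ) :
    ofMS (osp A A) = sElem (A.map (fun a => 2 * a)) := by
  induction A with
  | nil => simp [osp, ofMS]
  | cons a A ih =>
    rw [osp, ofMS_add, ofMS_add, osp_comm A (a :: A), self_cancel, zero_add,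
      ofMS_map_cons, ih]
    simp [sElem, Finsupp.mapDomain_single, two_mul]

/-- For a sequence `A = (a_1,…,a_n)` of positive integers, in `𝓕₂*` one has
`S_A · S_A = S_{(2a_1,…,2a_n)}`. -/
theorem sElem_mul_self (A : List ℕ) (hA : ∀ a ∈ A, 0 < a) :
    fmul (sElem A) (sElem A) = sElem (A.map (fun a => 2 * a)) := by
  rw [fmul, sElem, Finsupp.sum_single_index, Finsupp.sum_single_index]
  · rw [one_mul, one_smul]; exact ofMS_osp_self A
  · simp
  · simp [Finsupp.sum_single_index]
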